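/- Let (S,d) be a complete metric space and f : S → (-∞,+∞] proper, lower semicontinuous and (p,λ)-convex with λ > 0 and p ∈ (1,∞), q its conjugate exponent. Then f(v) - inf_S f ≤ (1/(q λ^{q/p})) |∂⁻f|^q(v) for every v ∈ D(f). Moreover, if D(|∂⁻f|) ≠ ∅, then f admits a unique minimizer ū and λ d^p(v, ū) ≤ f(v) - f(ū) for every v ∈ D(f). -/

import Mathlib

open Filter MeasureTheory Set Topology ENNReal NNReal

noncomputable section

variable {S : Type*} [MetricSpace S]

/-- The metric derivative of a curve `u` at time `t` is `m`. -/
def HasMetricDerivAt (u : ℝ → S) (t m : ℝ) : Prop :=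
  Tendsto (fun s => dist (u s) (u t) / |s - t|) (𝓝[≠] t) (𝓝 m)

/-- `v` is an absolutely continuous curve on `I` with (a.e.) metric derivative `dv`,
integrable on `I`, controlling distances. -/
def IsACCurveOn (v : ℝ → S) (I : Set ℝ) (dv : ℝ → ℝ) : Prop :=
  (∀ t ∈ I, 0 ≤ dv t) ∧ IntegrableOn dv I ∧
  (∀ s ∈ I, ∀ t ∈ I, s ≤ t → dist (v s) (v t) ≤ ∫ r in s..t, dv r) ∧
  (∀ᵐ t ∂(volume.restrict I), HasMetricDerivAt v t (dv t))

/-- The local (descending) slope `|∂⁻ f|`, valued in `ℝ≥0∞`. -/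
def slope' (f : S → EReal) (v : S) : ℝ≥0∞ :=
  if f v = ⊤ then ⊤
  else Filter.limsup (fun w => ENNReal.ofReal ((f v - f w).toReal) / edist v w) (𝓝[≠] v)

/-- `g` is a strong upper gradient for `f`. -/
def StrongUpperGradient (f : S → EReal) (g : S → ℝ≥0∞) : Prop :=
  ∀ (I : Set ℝ) (v : ℝ → S) (dv : ℝ → ℝ), IsACCurveOn v I dv →
    (∀ t ∈ I, f (v t) ≠ ⊤) →
    AEMeasurable (fun t => g (v t)) (volume.restrict I) ∧
    ∀ s ∈ I, ∀ t ∈ I, s ≤ t →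
      ENNReal.ofReal |(f (v t)).toReal - (f (v s)).toReal| ≤
        ∫⁻ r in Set.Ioc s t, g (v r) * ENNReal.ofReal (dv r)

/-- The interval `[0, a)` (with `a ∈ (0, ∞]`) as a subset of `ℝ`. -/
def Icoe (a : ℝ≥0∞) : Set ℝ := {t : ℝ | 0 ≤ t ∧ ENNReal.ofReal t < a}

/-- `u` is a `p`-curve of maximal slope for `f` on `[0,a)` starting from `u₀`,
with metric derivative `du` and non-increasing a.e. representative `φ` of `f ∘ u`. -/
structure IsCMS (f : S → EReal) (p q : ℝ) (a : ℝ≥0∞) (u₀ : S)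
    (u : ℝ → S) (du : ℝ → ℝ) (φ : ℝ → ℝ) : Prop where
  init : u 0 = u₀
  dom : f u₀ ≠ ⊤
  ac : ∀ T : ℝ, Set.Icc 0 T ⊆ Icoe a → IsACCurveOn u (Set.Icc 0 T) du
  anti : AntitoneOn φ (Icoe a)
  eq_ae : ∀ᵐ t ∂(volume.restrict (Icoe a)), (φ t : EReal) = f (u t)
  ineq : ∀ᵐ t ∂(volume.restrict (Icoe a)), ∃ φ' : ℝ,
    HasDerivWithinAt φ φ' (Icoe a) t ∧
    (φ' : EReal) ≤ -(((1/p) * du t ^ p : ℝ) : EReal)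
      - (((1/q : ℝ)) : EReal) * ((slope' f (u t) ^ q : ℝ≥0∞) : EReal)

/-- `f` is `(p, λ)`-convex. -/
def PLConvex (f : S → EReal) (p lam : ℝ) : Prop :=
  ∃ ψ : ℝ → ℝ, (∀ t ∈ Set.Icc (0:ℝ) 1, ψ t ∈ Set.Icc (0:ℝ) 1) ∧
    Tendsto ψ (𝓝[>] (0:ℝ)) (𝓝 0) ∧ (∃ t ∈ Set.Ioo (0:ℝ) 1, ψ t < 1) ∧
    ∀ v₀ v₁ : S, ∃ γ : ℝ → S, ContinuousOn γ (Set.Icc 0 1) ∧ γ 0 = v₀ ∧ γ 1 = v₁ ∧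
      (∀ t ∈ Set.Icc (0:ℝ) 1, dist (γ t) (γ 0) ≤ t * dist (γ 1) (γ 0)) ∧
      (∀ t ∈ Set.Icc (0:ℝ) 1,
        f (γ t) ≤ ((1 - t : ℝ) : EReal) * f (γ 0) + ((t : ℝ) : EReal) * f (γ 1)
          - ((lam * t * (1 - ψ t) * dist (γ 0) (γ 1) ^ p : ℝ) : EReal))

/-- The supremum of times at which the slope along `u` is positive. -/
def tstar (f : S → EReal) (u : ℝ → S) (a : ℝ≥0∞) : ℝ≥0∞ :=
  ⨆ t ∈ {t | t ∈ Icoe a ∧ 0 < slope' f (u t)}, ENNReal.ofReal t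
private lemma stmt6_young {p q lam G d : ℝ} (hp : 1 < p) (hpq : 1 / p + 1 / q = 1)
    (hlam : 0 < lam) (hG : 0 ≤ G) (hd : 0 ≤ d) :
    G * d - lam * d ^ p ≤ 1 / (q * lam ^ (q / p)) * G ^ q := by
  have hconj : Real.HolderConjugate p q := Real.holderConjugate_iff.mpr ⟨hp, by rw [← one_div, ← one_div]; exact hpq⟩
  have hq : 0 < q := hconj.symm.pos
  have hp0 : 0 < p := hconj.pos
  have hl1 : (0:ℝ) < lam ^ (1/p) := Real.rpow_pos_of_pos hlam _
  have hlqp : (0:ℝ) < lam ^ (q/p) := Real.rpow_pos_of_pos hlam _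
  have hy := Real.young_inequality_of_nonneg (a := lam ^ (1/p) * d) (b := G / lam ^ (1/p))
    (by positivity) (by positivity) hconj
  have h1 : lam ^ (1/p) * d * (G / lam ^ (1/p)) = G * d := by
    field_simp
  have h2 : (lam ^ (1/p) * d) ^ p = lam * d ^ p := by
    rw [Real.mul_rpow hl1.le hd, ← Real.rpow_mul hlam.le, one_div_mul_cancel hp0.ne',
      Real.rpow_one]
  have h3 : (G / lam ^ (1/p)) ^ q = G ^ q / lam ^ (q/p) := by
    rw [Real.div_rpow hG hl1.le, ← Real.rpow_mul hlam.le]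
    congr 2
    ring
  rw [h1, h2, h3] at hy
  have h4 : lam * d ^ p / p ≤ lam * d ^ p := by
    apply div_le_self (by positivity) hp.le
  have h5 : G ^ q / lam ^ (q/p) / q = 1 / (q * lam ^ (q/p)) * G ^ q := by
    rw [div_div, mul_comm (lam ^ (q/p)) q, one_div, inv_mul_eq_div]
  linarith [hy, h4, h5.le, h5.ge]

private lemma EReal_le_coe_helper {x : EReal} (hx : x ≠ ⊥) {c : ℝ}
    (h : x ≤ (c : EReal)) : x ≠ ⊤ ∧ x.toReal ≤ c := by
  have hxt : x ≠ ⊤ := (lt_of_le_of_lt h (EReal.coe_lt_top c)).ne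
  refine ⟨hxt, ?_⟩
  rw [← EReal.coe_le_coe_iff, EReal.coe_toReal hxt hx]
  exact h

private lemma stmt6_curve_real {f : S → EReal} (hbot : ∀ v, f v ≠ ⊥)
    {γ : ℝ → S} {ψ : ℝ → ℝ} {p lam t : ℝ}
    (hineq : ∀ t ∈ Set.Icc (0:ℝ) 1,
        f (γ t) ≤ ((1 - t : ℝ) : EReal) * f (γ 0) + ((t : ℝ) : EReal) * f (γ 1)
          - ((lam * t * (1 - ψ t) * dist (γ 0) (γ 1) ^ p : ℝ) : EReal))
    (ht : t ∈ Set.Icc (0:ℝ) 1) (h0 : f (γ 0) ≠ ⊤) (h1 : f (γ 1) ≠ ⊤) :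
    f (γ t) ≠ ⊤ ∧ (f (γ t)).toReal ≤ (1 - t) * (f (γ 0)).toReal + t * (f (γ 1)).toReal
      - lam * t * (1 - ψ t) * dist (γ 0) (γ 1) ^ p := by
  have e0 := EReal.coe_toReal h0 (hbot _)
  have e1 := EReal.coe_toReal h1 (hbot _)
  have h := hineq t ht
  rw [← e0, ← e1] at h
  have hcoe : ((1 - t : ℝ) : EReal) * ((f (γ 0)).toReal : EReal)
      + ((t : ℝ) : EReal) * ((f (γ 1)).toReal : EReal)
      - ((lam * t * (1 - ψ t) * dist (γ 0) (γ 1) ^ p : ℝ) : EReal)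
      = (((1 - t) * (f (γ 0)).toReal + t * (f (γ 1)).toReal
          - lam * t * (1 - ψ t) * dist (γ 0) (γ 1) ^ p : ℝ) : EReal) := by
    norm_cast
  rw [hcoe] at h
  exact EReal_le_coe_helper (hbot _) h

private lemma stmt6_slope_bound {f : S → EReal} (hbot : ∀ v, f v ≠ ⊥)
    {p lam : ℝ} (hp : 1 < p) (hlam : 0 < lam) (hconv : PLConvex f p lam)
    {v : S} (hv : f v ≠ ⊤) {G : ℝ} (hG : 0 ≤ G) (hsl : slope' f v ≤ ENNReal.ofReal G)
    (w : S) : f v - f w ≤ ((G * dist v w - lam * dist v w ^ p : ℝ) : EReal) := by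
  have hp0 : (0:ℝ) < p := lt_trans zero_lt_one hp
  by_cases hw : f w = ⊤
  · rw [hw, EReal.sub_top]
    exact bot_le
  set a := (f v).toReal with ha
  set b := (f w).toReal with hb
  have hfv := EReal.coe_toReal hv (hbot v)
  have hfw := EReal.coe_toReal hw (hbot w)
  by_cases hd0 : dist v w = 0
  · have hvw : w = v := by rw [← dist_eq_zero, dist_comm]; exact hd0
    subst hvw
    rw [← hfv, ← EReal.coe_sub, dist_self, EReal.coe_le_coe_iff,
      Real.zero_rpow hp0.ne']
    simp
  have hdpos : 0 < dist v w := lt_of_le_of_ne dist_nonneg (Ne.symm hd0)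
  by_contra hcon
  push_neg at hcon
  rw [← hfv, ← hfw, ← EReal.coe_sub, EReal.coe_lt_coe_iff] at hcon
  set d := dist v w with hd
  obtain ⟨ε, hε, hεpos⟩ : ∃ ε : ℝ, a - b - (G * d - lam * d ^ p) = ε ∧ 0 < ε :=
    ⟨_, rfl, by linarith⟩
  obtain ⟨ψ, hψmem, hψ0, -, hcurve⟩ := hconv
  obtain ⟨γ, hγc, hγ0, hγ1, hγd, hγf⟩ := hcurve v w
  set F : S → ℝ≥0∞ := fun w' => ENNReal.ofReal ((f v - f w').toReal) / edist v w' with hF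
  set C : ℝ≥0∞ := ENNReal.ofReal (G + ε / (2 * d)) with hC
  have hψsmall : ∀ᶠ t in 𝓝[>] (0:ℝ), lam * ψ t * d ^ p < ε / 2 := by
    have htend : Tendsto (fun t => lam * ψ t * d ^ p) (𝓝[>] (0:ℝ)) (𝓝 (lam * 0 * d ^ p)) :=
      (hψ0.const_mul lam).mul_const _
    refine htend.eventually_lt_const ?_
    rw [mul_zero, zero_mul]
    positivity
  have hIoo : ∀ᶠ t in 𝓝[>] (0:ℝ), t ∈ Set.Ioo (0:ℝ) 1 :=
    Ioo_mem_nhdsGT_of_mem ⟨le_refl 0, zero_lt_one⟩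
  have hkey : ∀ᶠ t in 𝓝[>] (0:ℝ), γ t ≠ v ∧ C ≤ F (γ t) := by
    filter_upwards [hψsmall, hIoo] with t hψt ht
    have hIcc : t ∈ Set.Icc (0:ℝ) 1 := ⟨ht.1.le, ht.2.le⟩
    have hc := stmt6_curve_real hbot hγf hIcc (hγ0 ▸ hv) (hγ1 ▸ hw)
    rw [hγ0, hγ1] at hc
    have hdist01 : dist v w = d := rfl
    set c := (f (γ t)).toReal with hcdef
    have hc2 : c ≤ (1 - t) * a + t * b - lam * t * (1 - ψ t) * d ^ p := hc.2
    have hlow : t * (G * d + ε / 2) ≤ a - c := by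
      have hψub : lam * (ψ t) * d ^ p < ε / 2 := hψt
      nlinarith [ht.1, hψub, hc2, hε]
    have hlowpos : 0 < t * (G * d + ε / 2) := by
      have : 0 < G * d + ε / 2 := by positivity
      exact mul_pos ht.1 this
    have hne : γ t ≠ v := by
      intro heq
      rw [heq] at hcdef
      have : c = a := hcdef
      rw [this] at hlow
      linarith
    refine ⟨hne, ?_⟩
    have hfvγ : f v - f (γ t) = ((a - c : ℝ) : EReal) := by
      rw [← hfv, ← EReal.coe_toReal hc.1 (hbot _), ← EReal.coe_sub]
    have htoReal : (f v - f (γ t)).toReal = a - c := by rw [hfvγ]; exact rfl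
    have hedist : edist v (γ t) ≤ ENNReal.ofReal (t * d) := by
      rw [edist_dist]
      apply ENNReal.ofReal_le_ofReal
      rw [dist_comm]
      calc dist (γ t) v = dist (γ t) (γ 0) := by rw [hγ0]
        _ ≤ t * dist (γ 1) (γ 0) := hγd t hIcc
        _ = t * d := by rw [hγ0, hγ1, dist_comm]
    have hq1 : C = ENNReal.ofReal (t * (G * d + ε / 2)) / ENNReal.ofReal (t * d) := by
      rw [hC, ← ENNReal.ofReal_div_of_pos (mul_pos ht.1 hdpos),
        mul_div_mul_left _ _ ht.1.ne', add_div, mul_div_cancel_right₀ G hd0, div_div]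
    rw [hF]
    simp only
    rw [htoReal, hq1]
    exact ENNReal.div_le_div (ENNReal.ofReal_le_ofReal hlow) hedist
  have htendγ : Tendsto γ (𝓝[>] (0:ℝ)) (𝓝[≠] v) := by
    rw [tendsto_nhdsWithin_iff]
    constructor
    · rw [tendsto_iff_dist_tendsto_zero]
      apply tendsto_of_tendsto_of_tendsto_of_le_of_le'
        (tendsto_const_nhds) (g := fun _ => (0:ℝ)) (h := fun t => t * d)
      · have : Tendsto (fun t : ℝ => t * d) (𝓝 (0:ℝ)) (𝓝 (0 * d)) :=
          (continuous_mul_right d).tendsto 0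
        rw [zero_mul] at this
        exact this.mono_left nhdsWithin_le_nhds
      · exact Filter.Eventually.of_forall fun t => dist_nonneg
      · filter_upwards [hIoo] with t ht
        calc dist (γ t) v = dist (γ t) (γ 0) := by rw [hγ0]
          _ ≤ t * dist (γ 1) (γ 0) := hγd t ⟨ht.1.le, ht.2.le⟩
          _ = t * d := by rw [hγ0, hγ1, dist_comm]
    · filter_upwards [hkey] with t ht using ht.1
  have hslope_eq : slope' f v = Filter.limsup F (𝓝[≠] v) := by
    rw [slope', if_neg hv]
  have h1 : C ≤ Filter.limsup F (Filter.map γ (𝓝[>] (0:ℝ))) := by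
    apply Filter.le_limsup_of_frequently_le'
    rw [Filter.frequently_map]
    exact (hkey.mono fun t ht => ht.2).frequently
  have h2 : Filter.limsup F (Filter.map γ (𝓝[>] (0:ℝ))) ≤ Filter.limsup F (𝓝[≠] v) :=
    Filter.limsup_le_limsup_of_le htendγ
  have h3 : C ≤ ENNReal.ofReal G := by
    calc C ≤ Filter.limsup F (𝓝[≠] v) := h1.trans h2
      _ = slope' f v := hslope_eq.symm
      _ ≤ ENNReal.ofReal G := hsl
  have h4 : ENNReal.ofReal G < C := by
    rw [hC, ENNReal.ofReal_lt_ofReal_iff (by positivity)]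
    have : 0 < ε / (2 * d) := by positivity
    linarith
  exact absurd h3 (not_le.mpr h4)

theorem stmt6 [CompleteSpace S] (f : S → EReal) (hproper : ∃ v, f v ≠ ⊤)
    (hbot : ∀ v, f v ≠ ⊥) (hlsc : LowerSemicontinuous f)
    (p q lam : ℝ) (hp : 1 < p) (hpq : 1 / p + 1 / q = 1) (hlam : 0 < lam)
    (hconv : PLConvex f p lam) :
    (∀ v : S, f v ≠ ⊤ →
      f v - ⨅ w, f w ≤
        (((1 / (q * lam ^ (q / p))) : ℝ) : EReal) * ((slope' f v ^ q : ℝ≥0∞) : EReal)) ∧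
    ((∃ v₀ : S, slope' f v₀ ≠ ⊤) →
      ∃ ub : S, (∀ w, f ub ≤ f w) ∧ (∀ w, (∀ w', f w ≤ f w') → w = ub) ∧
        ∀ v : S, f v ≠ ⊤ → ((lam * dist v ub ^ p : ℝ) : EReal) ≤ f v - f ub) := by
  have hconj : Real.HolderConjugate p q := Real.holderConjugate_iff.mpr ⟨hp, by rw [← one_div, ← one_div]; exact hpq⟩
  have hq0 : 0 < q := hconj.symm.pos
  have hp0 : (0:ℝ) < p := hconj.pos
  have hlqp : (0:ℝ) < lam ^ (q/p) := Real.rpow_pos_of_pos hlam _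
  have hcoefpos : (0:ℝ) < 1 / (q * lam ^ (q/p)) := by positivity
  -- the key bound for finite-slope points
  have hbound : ∀ v : S, f v ≠ ⊤ → slope' f v ≠ ⊤ →
      ∀ w, ((((f v).toReal - 1 / (q * lam ^ (q/p)) * (slope' f v).toReal ^ q : ℝ)) : EReal)
        ≤ f w := by
    intro v hv hsl w
    set G := (slope' f v).toReal with hGdef
    have hG : 0 ≤ G := ENNReal.toReal_nonneg
    have hslG : slope' f v ≤ ENNReal.ofReal G := by
      rw [hGdef, ENNReal.ofReal_toReal hsl]
    have hA := stmt6_slope_bound hbot hp hlam hconv hv hG hslG w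
    have hyoung := stmt6_young hp hpq hlam hG (dist_nonneg (x := v) (y := w))
    have hK : f v - f w ≤ ((1 / (q * lam ^ (q/p)) * G ^ q : ℝ) : EReal) :=
      hA.trans (EReal.coe_le_coe_iff.mpr hyoung)
    by_cases hw : f w = ⊤
    · rw [hw]; exact le_top
    · rw [← EReal.coe_toReal hv (hbot v), ← EReal.coe_toReal hw (hbot w),
        ← EReal.coe_sub, EReal.coe_le_coe_iff] at hK
      rw [← EReal.coe_toReal hw (hbot w), EReal.coe_le_coe_iff]
      linarith
  constructor
  · -- Part 1
    intro v hv
    by_cases hsl : slope' f v = ⊤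
    · rw [hsl, ENNReal.top_rpow_of_pos hq0, EReal.coe_ennreal_top,
        EReal.mul_top_of_pos (EReal.coe_pos.mpr hcoefpos)]
      exact le_top
    set G := (slope' f v).toReal with hGdef
    have hG : 0 ≤ G := ENNReal.toReal_nonneg
    set K := 1 / (q * lam ^ (q/p)) * G ^ q with hKdef
    have hRHS : (((1 / (q * lam ^ (q / p))) : ℝ) : EReal) * ((slope' f v ^ q : ℝ≥0∞) : EReal)
        = ((K : ℝ) : EReal) := by
      rw [← ENNReal.ofReal_toReal hsl, ENNReal.ofReal_rpow_of_nonneg hG hq0.le,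
        EReal.coe_ennreal_ofReal, max_eq_left (by positivity : (0:ℝ) ≤ G ^ q),
        ← EReal.coe_mul]
    rw [hRHS]
    set a := (f v).toReal with ha
    have hinf : (((a - K : ℝ)) : EReal) ≤ ⨅ w, f w := le_iInf (hbound v hv hsl)
    calc f v - ⨅ w, f w ≤ ((a:ℝ) : EReal) - (((a - K : ℝ)) : EReal) := by
          apply EReal.sub_le_sub _ hinf
          rw [← EReal.coe_toReal hv (hbot v)]
      _ = ((K : ℝ) : EReal) := by
          rw [← EReal.coe_sub]
          norm_num
  · -- Part 2
    rintro ⟨v₀, hsl₀⟩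
    have hfv₀ : f v₀ ≠ ⊤ := by
      intro h
      exact hsl₀ (by rw [slope', if_pos h])
    -- f is bounded below
    set c : ℝ := (f v₀).toReal - 1 / (q * lam ^ (q/p)) * (slope' f v₀).toReal ^ q with hc
    have hlow : ∀ w, ((c : ℝ) : EReal) ≤ f w := hbound v₀ hfv₀ hsl₀
    set m : EReal := ⨅ w, f w with hmdef
    have hmbot : m ≠ ⊥ := ((EReal.bot_lt_coe c).trans_le (le_iInf hlow)).ne'
    have hmtop : m ≠ ⊤ := ((iInf_le f v₀).trans_lt (lt_top_iff_ne_top.mpr hfv₀)).ne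
    set mr := m.toReal with hmrdef
    have hmr : (mr : EReal) = m := EReal.coe_toReal hmtop hmbot
    obtain ⟨ψ, hψmem, hψ0, ⟨t₀, ht₀, hψt₀⟩, hcurve⟩ := hconv
    -- the key distance estimate
    have keydist : ∀ t ∈ Set.Ioo (0:ℝ) 1, ∀ w w' : S, f w ≠ ⊤ → f w' ≠ ⊤ →
        lam * t * (1 - ψ t) * dist w w' ^ p
          ≤ (1 - t) * ((f w).toReal - mr) + t * ((f w').toReal - mr) := by
      intro t ht w w' hw hw'
      obtain ⟨γ, -, hγ0, hγ1, -, hγf⟩ := hcurve w w'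
      have hc' := stmt6_curve_real hbot hγf ⟨ht.1.le, ht.2.le⟩ (hγ0 ▸ hw) (hγ1 ▸ hw')
      rw [hγ0, hγ1] at hc'
      have hmle : (mr : EReal) ≤ f (γ t) := hmr.symm ▸ (iInf_le f (γ t))
      have hmle' : mr ≤ (f (γ t)).toReal := by
        rw [← EReal.coe_toReal hc'.1 (hbot _), EReal.coe_le_coe_iff] at hmle
        exact hmle
      nlinarith [hc'.2, hmle']
    have hc₀pos : (0:ℝ) < lam * t₀ * (1 - ψ t₀) := by
      have h1 : 0 < t₀ := ht₀.1
      have h2 : 0 < 1 - ψ t₀ := by linarith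
      positivity
    -- minimizing sequence
    have hseq : ∀ n : ℕ, ∃ w, f w < (((mr + 1/(n+1) : ℝ)) : EReal) := by
      intro n
      have hlt : m < (((mr + 1/((n:ℝ)+1) : ℝ)) : EReal) := by
        rw [← hmr, EReal.coe_lt_coe_iff]
        have : (0:ℝ) < 1/((n:ℝ)+1) := by positivity
        linarith
      exact iInf_lt_iff.mp (hmdef ▸ hlt)
    choose w hwlt using hseq
    have hwtop : ∀ n, f (w n) ≠ ⊤ := fun n => ((hwlt n).trans (EReal.coe_lt_top _)).ne
    have hwb : ∀ n, (f (w n)).toReal < mr + 1/((n:ℝ)+1) := by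
      intro n
      have := hwlt n
      rw [← EReal.coe_toReal (hwtop n) (hbot _), EReal.coe_lt_coe_iff] at this
      exact this
    have hwge : ∀ n, mr ≤ (f (w n)).toReal := by
      intro n
      have : (mr : EReal) ≤ f (w n) := hmr.symm ▸ (iInf_le f (w n))
      rw [← EReal.coe_toReal (hwtop n) (hbot _), EReal.coe_le_coe_iff] at this
      exact this
    have hcauchy : CauchySeq w := by
      have hbndstep : ∀ n k N : ℕ, N ≤ n → N ≤ k → dist (w n) (w k)
          ≤ ((1/((N:ℝ)+1)) / (lam * t₀ * (1 - ψ t₀))) ^ p⁻¹ := by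
        intro n k N hn hk
        have hkd := keydist t₀ ht₀ (w n) (w k) (hwtop n) (hwtop k)
        have hm1 : 1/((n:ℝ)+1) ≤ 1/((N:ℝ)+1) := by
          apply one_div_le_one_div_of_le (by positivity)
          have : (N:ℝ) ≤ n := Nat.cast_le.mpr hn
          linarith
        have hm2 : 1/((k:ℝ)+1) ≤ 1/((N:ℝ)+1) := by
          apply one_div_le_one_div_of_le (by positivity)
          have : (N:ℝ) ≤ k := Nat.cast_le.mpr hk
          linarith
        have hb1 : (f (w n)).toReal - mr < 1/((n:ℝ)+1) := by linarith [hwb n]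
        have hb2 : (f (w k)).toReal - mr < 1/((k:ℝ)+1) := by linarith [hwb k]
        have ht1 : (0:ℝ) < t₀ := ht₀.1
        have ht2 : t₀ < 1 := ht₀.2
        have hdp : lam * t₀ * (1 - ψ t₀) * dist (w n) (w k) ^ p ≤ 1/((N:ℝ)+1) := by
          nlinarith
        have hdp2 : dist (w n) (w k) ^ p ≤ (1/((N:ℝ)+1)) / (lam * t₀ * (1 - ψ t₀)) :=
          (le_div_iff₀' hc₀pos).mpr hdp
        calc dist (w n) (w k) = (dist (w n) (w k) ^ p) ^ p⁻¹ :=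
              (Real.rpow_rpow_inv dist_nonneg hp0.ne').symm
          _ ≤ ((1/((N:ℝ)+1)) / (lam * t₀ * (1 - ψ t₀))) ^ p⁻¹ :=
              Real.rpow_le_rpow (Real.rpow_nonneg dist_nonneg p) hdp2 (by positivity)
      have hbase : Tendsto (fun N : ℕ => (1/((N:ℝ)+1)) / (lam * t₀ * (1 - ψ t₀)))
          atTop (𝓝 0) := by
        have := tendsto_one_div_add_atTop_nhds_zero_nat (𝕜 := ℝ)
        have h2 := this.div_const (lam * t₀ * (1 - ψ t₀))
        rw [zero_div] at h2
        exact h2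
      have htend0 := hbase.rpow_const (Or.inr (by positivity : (0:ℝ) ≤ p⁻¹))
      rw [Real.zero_rpow (by positivity : p⁻¹ ≠ 0)] at htend0
      exact cauchySeq_of_le_tendsto_0 _ hbndstep htend0
    obtain ⟨ub, hub⟩ := cauchySeq_tendsto_of_complete hcauchy
    have hfub_le : f ub ≤ m := by
      by_contra h
      push_neg at h
      obtain ⟨c', hc1, hc2⟩ := exists_between h
      have hc'top : c' ≠ ⊤ := hc2.ne_top
      have hc'bot : c' ≠ ⊥ := ((EReal.bot_lt_coe mr).trans_le (hmr ▸ hc1.le)).ne'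
      set cr := c'.toReal with hcrdef
      have hcr : (cr : EReal) = c' := EReal.coe_toReal hc'top hc'bot
      have hmrcr : mr < cr := by
        rw [← EReal.coe_lt_coe_iff, hcr, hmr]; exact hc1
      have ev1 : ∀ᶠ x in 𝓝 ub, c' < f x := hlsc ub c' hc2
      have ev2 : ∀ᶠ n in atTop, c' < f (w n) := hub.eventually ev1
      have ev3 : ∀ᶠ (n : ℕ) in atTop, mr + 1/((n:ℝ)+1) < cr := by
        have htt : Tendsto (fun n : ℕ => mr + 1/((n:ℝ)+1)) atTop (𝓝 (mr + 0)) :=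
          tendsto_const_nhds.add tendsto_one_div_add_atTop_nhds_zero_nat
        rw [add_zero] at htt
        exact htt.eventually_lt_const hmrcr
      obtain ⟨n, h1, h2⟩ := (ev2.and ev3).exists
      have : c' < (((mr + 1/((n:ℝ)+1) : ℝ)) : EReal) := h1.trans (hwlt n)
      rw [← hcr, EReal.coe_lt_coe_iff] at this
      linarith
    have hmin : ∀ w', f ub ≤ f w' := fun w' => hfub_le.trans (iInf_le f w')
    have hfub_eq : f ub = m := le_antisymm hfub_le (iInf_le f ub)
    have hfubtop : f ub ≠ ⊤ := hfub_eq ▸ hmtop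
    have hfubr : (f ub).toReal = mr := by rw [hfub_eq]
    refine ⟨ub, hmin, ?_, ?_⟩
    · -- uniqueness
      intro w' hw'
      have heq : f w' = f ub := le_antisymm (hw' ub) (hmin w')
      have hw'top : f w' ≠ ⊤ := heq ▸ hfubtop
      have hb' : (f w').toReal = mr := by rw [heq, hfubr]
      have hkd := keydist t₀ ht₀ w' ub hw'top hfubtop
      rw [hb', hfubr] at hkd
      simp only [sub_self, mul_zero, add_zero] at hkd
      by_contra hne
      have hd : 0 < dist w' ub := dist_pos.mpr hne
      have : 0 < lam * t₀ * (1 - ψ t₀) * dist w' ub ^ p :=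
        mul_pos hc₀pos (Real.rpow_pos_of_pos hd p)
      linarith
    · -- the final inequality
      intro v hv
      set a := (f v).toReal with ha
      have hbnd : ∀ t ∈ Set.Ioo (0:ℝ) 1, lam * (1 - ψ t) * dist ub v ^ p ≤ a - mr := by
        intro t ht
        have hkd := keydist t ht ub v hfubtop hv
        rw [hfubr] at hkd
        simp only [sub_self, mul_zero, zero_add] at hkd
        have ht1 : (0:ℝ) < t := ht.1
        nlinarith
      have htt : Tendsto (fun t => lam * (1 - ψ t) * dist ub v ^ p) (𝓝[>] (0:ℝ))
          (𝓝 (lam * (1 - 0) * dist ub v ^ p)) :=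
        ((tendsto_const_nhds.sub hψ0).const_mul lam).mul_const _
      have hlim : lam * (1 - 0) * dist ub v ^ p ≤ a - mr := by
        apply le_of_tendsto htt
        filter_upwards [Ioo_mem_nhdsGT_of_mem
          (⟨le_refl (0:ℝ), zero_lt_one⟩ : (0:ℝ) ∈ Set.Ico (0:ℝ) 1)] with t ht
        exact hbnd t ht
      rw [sub_zero, mul_one] at hlim
      rw [← EReal.coe_toReal hv (hbot v), hfub_eq, ← hmr, ← EReal.coe_sub,
        EReal.coe_le_coe_iff, dist_comm]
      exact hlim.trans (le_refl _)
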